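/- Let R be an integral domain with quotient field L, T an overring of R, * a star operation on R and *' a star operation on T. Then the map δ(*',*) : F(R) → F(R) defined by E ↦ (ET)^{*'} ∩ E^{*} is a star operation on R. Moreover, if * and *' are of finite type, then δ(*',*) is of finite type. -/

import Mathlib

open scoped nonZeroDivisors

/-- A star operation on the integral domain `R`, given as a subring of (the field) `L`,
with respect to the quotient field of `R` inside `L`. -/
structure StarOp (L : Type*) [CommRing L] (R : Subring L) where
  toFun : FractionalIdeal (nonZeroDivisors R) L → FractionalIdeal (nonZeroDivisors R) L
  smul_star : ∀ (a : L), a ≠ 0 → ∀ E F : FractionalIdeal (nonZeroDivisors R) L, E ≠ 0 →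
    ((F : Submodule R L) : Set L) = (fun y => a * y) '' ((E : Submodule R L) : Set L) →
    ((toFun F : Submodule R L) : Set L) = (fun y => a * y) '' ((toFun E : Submodule R L) : Set L)
  le_star : ∀ E : FractionalIdeal (nonZeroDivisors R) L, E ≠ 0 → E ≤ toFun E
  mono_star : ∀ E F : FractionalIdeal (nonZeroDivisors R) L, E ≠ 0 → F ≠ 0 →
    E ≤ F → toFun E ≤ toFun F
  star_star : ∀ E : FractionalIdeal (nonZeroDivisors R) L, E ≠ 0 → toFun (toFun E) = toFun E

/-- A star operation is of finite type if `E* = ⋃ {F* : F ∈ f(R), F ⊆ E}`. -/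
def StarOp.IsFiniteType {L : Type*} [CommRing L] {R : Subring L} (s : StarOp L R) : Prop :=
  ∀ E : FractionalIdeal (nonZeroDivisors R) L, E ≠ 0 →
    ((s.toFun E : Submodule R L) : Set L) =
      ⋃ F ∈ {F : FractionalIdeal (nonZeroDivisors R) L |
          F ≠ 0 ∧ (F : Submodule R L).FG ∧ F ≤ E},
        ((s.toFun F : Submodule R L) : Set L)

/-- `StarFC L R` is the set of star operations of finite type on `R`. -/
def StarFC (L : Type*) [CommRing L] (R : Subring L) : Type _ :=
  {s : StarOp L R // s.IsFiniteType}

/-- `R` is finitely star regular if `|StarFC(T)| ≤ |StarFC(R)|` for every overring `T` of `R`. -/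
def FinStarRegular (L : Type*) [CommRing L] (R : Subring L) : Prop :=
  ∀ T : Subring L, R ≤ T → Cardinal.mk (StarFC L T) ≤ Cardinal.mk (StarFC L R)

/-- `R` is star regular if `|Star(T)| ≤ |Star(R)|` for every overring `T` of `R`. -/
def StarRegular (L : Type*) [CommRing L] (R : Subring L) : Prop :=
  ∀ T : Subring L, R ≤ T → Cardinal.mk (StarOp L T) ≤ Cardinal.mk (StarOp L R)

section DeltaAux

variable {L : Type*} [Field L] {R T : Subring L}

lemma isInteger_iff_subring (x : L) : IsLocalization.IsInteger R x ↔ x ∈ R := by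
  constructor
  · rintro ⟨r, rfl⟩; exact r.2
  · exact fun h => ⟨⟨x, h⟩, rfl⟩

lemma coe_ne_zero_of_mem_nzd {a : ↥R} (ha : a ∈ nonZeroDivisors R) : (a : L) ≠ 0 := by
  intro h
  exact nonZeroDivisors.ne_zero ha (Subtype.ext h)

lemma frac_ne_bot {E : FractionalIdeal (nonZeroDivisors R) L} (hE : E ≠ 0) :
    (E : Submodule R L) ≠ ⊥ :=
  fun h => hE (FractionalIdeal.coeToSubmodule_eq_bot.1 h)

lemma frac_ne_zero_of_le {E F : FractionalIdeal (nonZeroDivisors R) L} (hE : E ≠ 0)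
    (h : E ≤ F) : F ≠ 0 := by
  intro hF
  subst hF
  have h2 := FractionalIdeal.coe_le_coe.2 h
  rw [FractionalIdeal.coe_zero] at h2
  exact hE (FractionalIdeal.coeToSubmodule_eq_bot.1 (le_bot_iff.1 h2))

lemma isFractional_of_le {I J : Submodule R L} (hJ : IsFractional (nonZeroDivisors R) J)
    (h : I ≤ J) : IsFractional (nonZeroDivisors R) I := by
  obtain ⟨a, ha, hp⟩ := hJ
  exact ⟨a, ha, fun b hb => hp b (h hb)⟩

lemma span_image_mul (a : L) (s : Set L) :
    ((Submodule.span T ((fun y => a * y) '' s) : Submodule T L) : Set L) =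
      (fun y => a * y) '' (Submodule.span T s) := by
  have h : Submodule.span T ((fun y => a * y) '' s) =
      Submodule.map (LinearMap.mulLeft T a) (Submodule.span T s) := by
    rw [Submodule.map_span]; rfl
  rw [h, Submodule.map_coe]; rfl

/-- The `T`-submodule generated by a fractional `R`-ideal is a fractional `T`-ideal. -/
noncomputable def extIdeal (hRT : R ≤ T) (E : FractionalIdeal (nonZeroDivisors R) L) :
    FractionalIdeal (nonZeroDivisors T) L :=
  ⟨Submodule.span T ((E : Submodule R L) : Set L), by
    obtain ⟨a, ha, hp⟩ := E.isFractional
    have haL : (a : L) ≠ 0 := coe_ne_zero_of_mem_nzd ha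
    refine ⟨⟨a, hRT a.2⟩,
      mem_nonZeroDivisors_of_ne_zero (fun h => haL (by simpa using congrArg Subtype.val h)), ?_⟩
    intro b hb
    rw [isInteger_iff_subring]
    show ((⟨(a:L), hRT a.2⟩ : T) : L) * b ∈ T
    induction hb using Submodule.span_induction with
    | mem x hx =>
        have := hp x hx
        rw [isInteger_iff_subring] at this
        exact hRT (by simpa [Subring.smul_def] using this)
    | zero => simpa using T.zero_mem
    | add x y _ _ hx hy => rw [mul_add]; exact T.add_mem hx hy
    | smul t x _ hx =>
        have hx' : (a : L) * x ∈ T := by simpa using hx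
        have heq : (a : L) * (t • x) = (t : L) * ((a : L) * x) := by
          simp only [Subring.smul_def, smul_eq_mul]; ring
        rw [heq]
        exact T.mul_mem t.2 hx'⟩

lemma extIdeal_coe (hRT : R ≤ T) (E : FractionalIdeal (nonZeroDivisors R) L) :
    (extIdeal hRT E : Submodule T L) = Submodule.span T ((E : Submodule R L) : Set L) := rfl

lemma le_extIdeal (hRT : R ≤ T) (E : FractionalIdeal (nonZeroDivisors R) L) {x : L}
    (hx : x ∈ E) : x ∈ extIdeal hRT E := by
  have : x ∈ (extIdeal hRT E : Submodule T L) := Submodule.subset_span hx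
  exact this

lemma extIdeal_ne_zero (hRT : R ≤ T) {E : FractionalIdeal (nonZeroDivisors R) L} (hE : E ≠ 0) :
    extIdeal hRT E ≠ 0 := by
  obtain ⟨x, hxE, hx0⟩ := Submodule.exists_mem_ne_zero_of_ne_bot (frac_ne_bot hE)
  intro h
  have : x ∈ (extIdeal hRT E : Submodule T L) := Submodule.subset_span hxE
  rw [h, FractionalIdeal.coe_zero, Submodule.mem_bot] at this
  exact hx0 this

lemma extIdeal_mono (hRT : R ≤ T) {E F : FractionalIdeal (nonZeroDivisors R) L} (h : E ≤ F) :
    extIdeal hRT E ≤ extIdeal hRT F := by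
  rw [← FractionalIdeal.coe_le_coe, extIdeal_coe, extIdeal_coe]
  exact Submodule.span_mono (FractionalIdeal.coe_le_coe.2 h)

noncomputable def restrictSub (hRT : R ≤ T) (M : Submodule T L) : Submodule R L where
  carrier := M
  add_mem' := fun h1 h2 => M.add_mem h1 h2
  zero_mem' := M.zero_mem
  smul_mem' := fun r x hx => by
    have h := M.smul_mem (⟨r, hRT r.2⟩ : T) hx
    simpa [Subring.smul_def] using h

variable (hRT : R ≤ T) (star : StarOp L R) (star' : StarOp L T)

/-- The delta fractional ideal `(ET)^{*'} ∩ E^{*}`. -/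
noncomputable def deltaIdeal (E : FractionalIdeal (nonZeroDivisors R) L) :
    FractionalIdeal (nonZeroDivisors R) L :=
  ⟨restrictSub hRT (star'.toFun (extIdeal hRT E) : Submodule T L) ⊓
      (star.toFun E : Submodule R L), by
    exact isFractional_of_le (star.toFun E).isFractional inf_le_right⟩

lemma mem_deltaIdeal {E : FractionalIdeal (nonZeroDivisors R) L} {x : L} :
    x ∈ (deltaIdeal hRT star star' E : Submodule R L) ↔
      x ∈ (star'.toFun (extIdeal hRT E) : Submodule T L) ∧
        x ∈ (star.toFun E : Submodule R L) :=
  Submodule.mem_inf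

lemma deltaIdeal_coe_set (E : FractionalIdeal (nonZeroDivisors R) L) :
    ((deltaIdeal hRT star star' E : Submodule R L) : Set L) =
      ((star'.toFun (extIdeal hRT E) : Submodule T L) : Set L) ∩
        ((star.toFun E : Submodule R L) : Set L) := rfl

lemma le_deltaIdeal {E : FractionalIdeal (nonZeroDivisors R) L} (hE : E ≠ 0) :
    E ≤ deltaIdeal hRT star star' E := by
  rw [← FractionalIdeal.coe_le_coe]
  intro x hx
  rw [mem_deltaIdeal]
  refine ⟨FractionalIdeal.coe_le_coe.2 (star'.le_star _ (extIdeal_ne_zero hRT hE)) ?_,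
    FractionalIdeal.coe_le_coe.2 (star.le_star _ hE) hx⟩
  rw [extIdeal_coe]
  exact Submodule.subset_span hx

lemma deltaIdeal_ne_zero {E : FractionalIdeal (nonZeroDivisors R) L} (hE : E ≠ 0) :
    deltaIdeal hRT star star' E ≠ 0 :=
  frac_ne_zero_of_le hE (le_deltaIdeal hRT star star' hE)

lemma deltaIdeal_mono {E F : FractionalIdeal (nonZeroDivisors R) L} (hE : E ≠ 0) (hF : F ≠ 0)
    (h : E ≤ F) : deltaIdeal hRT star star' E ≤ deltaIdeal hRT star star' F := by
  rw [← FractionalIdeal.coe_le_coe]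
  intro x hx
  rw [mem_deltaIdeal] at hx ⊢
  exact ⟨FractionalIdeal.coe_le_coe.2 (star'.mono_star _ _ (extIdeal_ne_zero hRT hE)
      (extIdeal_ne_zero hRT hF) (extIdeal_mono hRT h)) hx.1,
    FractionalIdeal.coe_le_coe.2 (star.mono_star _ _ hE hF h) hx.2⟩

lemma deltaIdeal_idem {E : FractionalIdeal (nonZeroDivisors R) L} (hE : E ≠ 0) :
    deltaIdeal hRT star star' (deltaIdeal hRT star star' E) = deltaIdeal hRT star star' E := by
  have hδ : deltaIdeal hRT star star' E ≠ 0 := deltaIdeal_ne_zero hRT star star' hE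
  have hsE : star.toFun E ≠ 0 := frac_ne_zero_of_le hE (star.le_star E hE)
  have hET : extIdeal hRT E ≠ 0 := extIdeal_ne_zero hRT hE
  have hsET : star'.toFun (extIdeal hRT E) ≠ 0 :=
    frac_ne_zero_of_le hET (star'.le_star _ hET)
  refine le_antisymm ?_ (le_deltaIdeal hRT star star' hδ)
  rw [← FractionalIdeal.coe_le_coe]
  intro x hx
  rw [mem_deltaIdeal] at hx ⊢
  obtain ⟨h1, h2⟩ := hx
  constructor
  · -- x ∈ star' (ext (δE)) ≤ star' (star' (ext E)) = star' (ext E)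
    have hle : extIdeal hRT (deltaIdeal hRT star star' E) ≤ star'.toFun (extIdeal hRT E) := by
      rw [← FractionalIdeal.coe_le_coe, extIdeal_coe]
      rw [Submodule.span_le]
      intro y hy
      exact ((mem_deltaIdeal hRT star star').1 hy).1
    have h3 := FractionalIdeal.coe_le_coe.2
      (star'.mono_star _ _ (extIdeal_ne_zero hRT hδ) hsET hle) h1
    rwa [star'.star_star _ hET] at h3
  · have hle : deltaIdeal hRT star star' E ≤ star.toFun E := by
      rw [← FractionalIdeal.coe_le_coe]
      exact fun y hy => ((mem_deltaIdeal hRT star star').1 hy).2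
    have h3 := FractionalIdeal.coe_le_coe.2 (star.mono_star _ _ hδ hsE hle) h2
    rwa [star.star_star _ hE] at h3

/-- The delta star operation. -/
noncomputable def deltaStarOp : StarOp L R where
  toFun := deltaIdeal hRT star star'
  smul_star := by
    intro a ha E F hE hset
    have hF : F ≠ 0 := by
      intro h
      subst h
      obtain ⟨x, hxE, hx0⟩ := Submodule.exists_mem_ne_zero_of_ne_bot (frac_ne_bot hE)
      have hmem : a * x ∈ (((0 : FractionalIdeal (nonZeroDivisors R) L) :
          Submodule R L) : Set L) := by
        rw [hset]; exact ⟨x, hxE, rfl⟩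
      simp only [FractionalIdeal.coe_zero, Submodule.bot_coe, Set.mem_singleton_iff] at hmem
      exact mul_ne_zero ha hx0 hmem
    -- star part
    have hstar := star.smul_star a ha E F hE hset
    -- ext part
    have hext : ((extIdeal hRT F : Submodule T L) : Set L) =
        (fun y => a * y) '' ((extIdeal hRT E : Submodule T L) : Set L) := by
      rw [extIdeal_coe, extIdeal_coe, hset, span_image_mul]
    have hstar' := star'.smul_star a ha (extIdeal hRT E) (extIdeal hRT F)
      (extIdeal_ne_zero hRT hE) hext
    rw [deltaIdeal_coe_set, deltaIdeal_coe_set, hstar, hstar',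
      ← Set.image_inter (mul_right_injective₀ ha)]
  le_star := fun E hE => le_deltaIdeal hRT star star' hE
  mono_star := fun E F hE hF h => deltaIdeal_mono hRT star star' hE hF h
  star_star := fun E hE => deltaIdeal_idem hRT star star' hE

end DeltaAux

/-- for an overring `T` of `R`, a star operation `*` on `R` and a star
operation `*'` on `T`, the map `E ↦ (ET)^{*'} ∩ E^{*}` is a star operation on `R`,
which is of finite type whenever `*` and `*'` are. -/
theorem delta_starOp (L : Type*) [Field L] (R T : Subring L) [IsFractionRing R L]
    (hRT : R ≤ T) (star : StarOp L R) (star' : StarOp L T) :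
    ∃ δ : StarOp L R,
      (∀ E : FractionalIdeal (nonZeroDivisors R) L, E ≠ 0 →
        ∀ ET : FractionalIdeal (nonZeroDivisors T) L,
          (ET : Submodule T L) = Submodule.span T ((E : Submodule R L) : Set L) →
          ((δ.toFun E : Submodule R L) : Set L) =
            ((star'.toFun ET : Submodule T L) : Set L) ∩
              ((star.toFun E : Submodule R L) : Set L)) ∧
      (star.IsFiniteType → star'.IsFiniteType → δ.IsFiniteType) := by
  classical
  refine ⟨deltaStarOp hRT star star', ?_, ?_⟩
  · intro E hE ET hET
    have hETeq : ET = extIdeal hRT E := by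
      apply FractionalIdeal.coeToSubmodule_injective
      show (ET : Submodule T L) = (extIdeal hRT E : Submodule T L)
      rw [hET, extIdeal_coe]
    subst hETeq
    exact deltaIdeal_coe_set hRT star star' E
  · intro hft hft'
    intro E hE
    show ((deltaIdeal hRT star star' E : Submodule R L) : Set L) = _
    apply Set.Subset.antisymm
    · intro x hx
      rw [deltaIdeal_coe_set] at hx
      obtain ⟨hx1, hx2⟩ := hx
      -- from star finite type: there is a f.g. G ≤ E with x ∈ star G
      rw [hft E hE] at hx2
      simp only [Set.mem_iUnion, exists_prop] at hx2
      obtain ⟨G, ⟨hG0, hGfg, hGE⟩, hxG⟩ := hx2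
      -- from star' finite type: there is a f.g. H ≤ ET with x ∈ star' H
      rw [hft' (extIdeal hRT E) (extIdeal_ne_zero hRT hE)] at hx1
      simp only [Set.mem_iUnion, exists_prop] at hx1
      obtain ⟨H, ⟨hH0, hHfg, hHE⟩, hxH⟩ := hx1
      -- H is generated by a finite set, each of whose elements lies in span T E,
      -- hence in span T of a finite subset of E.
      obtain ⟨s, hs⟩ := hHfg
      have hmem : ∀ y : L, ∃ u : Finset L,
          (u : Set L) ⊆ ((E : Submodule R L) : Set L) ∧
            (y ∈ (s : Set L) → y ∈ Submodule.span T (u : Set L)) := by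
        intro y
        by_cases hy : y ∈ (s : Set L)
        · have h1 : y ∈ (H : Submodule T L) := hs ▸ Submodule.subset_span hy
          have h2 : y ∈ Submodule.span T ((E : Submodule R L) : Set L) := by
            have h' := FractionalIdeal.coe_le_coe.2 hHE
            rw [extIdeal_coe] at h'
            exact h' h1
          obtain ⟨u, hu1, hu2⟩ := Submodule.mem_span_finite_of_mem_span h2
          exact ⟨u, hu1, fun _ => hu2⟩
        · exact ⟨∅, by simp, fun h => absurd h hy⟩
      choose u hu1 hu2 using hmem
      set U : Set L := ⋃ y ∈ (s : Set L), ((u y) : Set L) with hU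
      have hUfin : U.Finite :=
        Set.Finite.biUnion s.finite_toSet (fun y _ => (u y).finite_toSet)
      have hUE : U ⊆ ((E : Submodule R L) : Set L) := by
        intro z hz
        simp only [hU, Set.mem_iUnion] at hz
        obtain ⟨y, _, hzu⟩ := hz
        exact hu1 y hzu
      -- the finitely generated ideal G' = G ⊔ span R U
      have hG'frac : IsFractional (nonZeroDivisors R) ((G : Submodule R L) ⊔
          Submodule.span R U) :=
        isFractional_of_le E.isFractional
          (sup_le (FractionalIdeal.coe_le_coe.2 hGE) (Submodule.span_le.2 hUE))
      set G' : FractionalIdeal (nonZeroDivisors R) L := ⟨_, hG'frac⟩ with hG'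
      have hGG' : G ≤ G' := by
        rw [← FractionalIdeal.coe_le_coe]
        exact le_sup_left
      have hG'0 : G' ≠ 0 := frac_ne_zero_of_le hG0 hGG'
      have hG'fg : (G' : Submodule R L).FG :=
        Submodule.FG.sup hGfg (Submodule.fg_span hUfin)
      have hG'E : G' ≤ E := by
        rw [← FractionalIdeal.coe_le_coe]
        exact sup_le (FractionalIdeal.coe_le_coe.2 hGE) (Submodule.span_le.2 hUE)
      -- H ≤ ext G'
      have hHG' : H ≤ extIdeal hRT G' := by
        rw [← FractionalIdeal.coe_le_coe, extIdeal_coe, ← hs, Submodule.span_le]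
        intro y hy
        have hyu : y ∈ Submodule.span T ((u y : Finset L) : Set L) := hu2 y hy
        refine Submodule.span_mono ?_ hyu
        intro z hz
        have : z ∈ Submodule.span R U := Submodule.subset_span (by
          simp only [hU, Set.mem_iUnion]; exact ⟨y, hy, hz⟩)
        exact le_sup_right (α := Submodule R L) this
      -- conclude
      simp only [Set.mem_iUnion, exists_prop]
      refine ⟨G', ⟨hG'0, hG'fg, hG'E⟩, ?_⟩
      show x ∈ ((deltaIdeal hRT star star' G' : Submodule R L) : Set L)
      rw [deltaIdeal_coe_set]
      exact ⟨FractionalIdeal.coe_le_coe.2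
          (star'.mono_star _ _ hH0 (extIdeal_ne_zero hRT hG'0) hHG') hxH,
        FractionalIdeal.coe_le_coe.2 (star.mono_star _ _ hG0 hG'0 hGG') hxG⟩
    · intro x hx
      simp only [Set.mem_iUnion, exists_prop] at hx
      obtain ⟨F, ⟨hF0, hFfg, hFE⟩, hxF⟩ := hx
      exact FractionalIdeal.coe_le_coe.2 (deltaIdeal_mono hRT star star' hF0 hE hFE) hxF
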